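/- Lemma A.1 (strict monotonicity of F in k): Fix α ∈ (0,1) and x ∈ ℝ, and define for real y > α the quantity F(α, x, y) = 1 − y[Φ(x + z_y) − Φ(x − z_y)] where z_y = Φ⁻¹(1 − α/(2y)). Then y ↦ F(α, x, y) is strictly decreasing on (α, ∞); in particular, for integers 1 ≤ k₁ < k₂, F(α, x, k₂) < F(α, x, k₁). -/

import Mathlib

open scoped Classical

noncomputable section

open MeasureTheory Set Filter Real Topology

/-- The standard normal CDF. -/
def Phi (x : ℝ) : ℝ := ∫ t in Set.Iic x, Real.exp (-(t ^ 2) / 2) / Real.sqrt (2 * Real.pi)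

/-- The standard normal quantile function (inverse of `Phi` on (0,1)). -/
def PhiInv (q : ℝ) : ℝ := sInf {x : ℝ | q ≤ Phi x}

/-- The power function `F(α,x,y) = 1 − y[Φ(x+z_y) − Φ(x−z_y)]`, `z_y = Φ⁻¹(1 − α/(2y))`. -/
def Fpow (α x y : ℝ) : ℝ :=
  1 - y * (Phi (x + PhiInv (1 - α / (2 * y))) - Phi (x - PhiInv (1 - α / (2 * y))))

def phiD (t : ℝ) : ℝ := Real.exp (-(t ^ 2) / 2) / Real.sqrt (2 * Real.pi)

lemma phiD_pos (t : ℝ) : 0 < phiD t :=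
  div_pos (Real.exp_pos _) (Real.sqrt_pos.2 (by positivity))

lemma phiD_cont : Continuous phiD := by
  unfold phiD; fun_prop

lemma phiD_eq (t : ℝ) : phiD t = Real.exp (-(1/2) * t ^ 2) * (Real.sqrt (2 * Real.pi))⁻¹ := by
  unfold phiD; rw [div_eq_mul_inv]; ring_nf

lemma phiD_int : Integrable phiD := by
  have : Integrable (fun t : ℝ => Real.exp (-(1/2) * t ^ 2) * (Real.sqrt (2 * Real.pi))⁻¹) :=
    (integrable_exp_neg_mul_sq (by norm_num)).mul_const _
  exact this.congr (by filter_upwards with t using (phiD_eq t).symm)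

lemma phiD_total : ∫ t, phiD t = 1 := by
  have h : ∫ t : ℝ, Real.exp (-(1/2) * t ^ 2) = Real.sqrt (Real.pi / (1/2)) :=
    integral_gaussian (1/2)
  have : ∫ t, phiD t = (∫ t : ℝ, Real.exp (-(1/2) * t ^ 2)) * (Real.sqrt (2 * Real.pi))⁻¹ := by
    rw [← integral_mul_const]; exact integral_congr_ae (by filter_upwards with t using phiD_eq t)
  rw [this, h]
  rw [show Real.pi / (1/2) = 2 * Real.pi by ring]
  rw [mul_inv_cancel₀ (by positivity)]

lemma Phi_eq (x : ℝ) : Phi x = ∫ t in Set.Iic x, phiD t := rfl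

lemma Phi_sub (a b : ℝ) : Phi b - Phi a = ∫ t in a..b, phiD t := by
  rw [Phi_eq, Phi_eq]
  exact intervalIntegral.integral_Iic_sub_Iic phiD_int.integrableOn phiD_int.integrableOn

lemma Phi_strictMono : StrictMono Phi := by
  intro a b hab
  have h : 0 < ∫ t in a..b, phiD t :=
    intervalIntegral.intervalIntegral_pos_of_pos phiD_int.intervalIntegrable phiD_pos hab
  linarith [Phi_sub a b]

lemma Phi_hasDeriv (x : ℝ) : HasDerivAt Phi (phiD x) x := by
  have h : HasDerivAt (fun u => ∫ t in (0:ℝ)..u, phiD t) (phiD x) x :=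
    intervalIntegral.integral_hasDerivAt_right phiD_int.intervalIntegrable
      phiD_cont.aestronglyMeasurable.stronglyMeasurableAtFilter phiD_cont.continuousAt
  have : (fun u => Phi 0 + ∫ t in (0:ℝ)..u, phiD t) = Phi := by
    funext u; linarith [Phi_sub 0 u]
  simpa [this] using (h.const_add (Phi 0))

lemma Phi_cont : Continuous Phi := by
  have : Differentiable ℝ Phi := fun x => (Phi_hasDeriv x).differentiableAt
  exact this.continuous

lemma Phi_add_compl (x : ℝ) : Phi x + ∫ t in Set.Ioi x, phiD t = 1 := by
  rw [Phi_eq, intervalIntegral.integral_Iic_add_Ioi phiD_int.integrableOn phiD_int.integrableOn, phiD_total]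

lemma integral_Ioi_pos (x : ℝ) : 0 < ∫ t in Set.Ioi x, phiD t := by
  rw [setIntegral_pos_iff_support_of_nonneg_ae
    (Filter.Eventually.of_forall fun t => (phiD_pos t).le) phiD_int.integrableOn]
  have : Function.support phiD = Set.univ := by
    ext t; simp [Function.mem_support, (phiD_pos t).ne']
  rw [this, Set.univ_inter]
  simp [Real.volume_Ioi]

lemma Phi_lt_one (x : ℝ) : Phi x < 1 := by
  have := Phi_add_compl x; have := integral_Ioi_pos x; linarith

lemma Phi_zero : Phi 0 = 1 / 2 := by
  have h1 : ∫ t in Set.Iic (0:ℝ), phiD t = ∫ t in Set.Ioi (0:ℝ), phiD t := by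
    have := integral_comp_neg_Iic (c := (0:ℝ)) (f := phiD)
    rw [neg_zero] at this
    rw [← this]
    exact integral_congr_ae (Filter.Eventually.of_forall fun t => by
      show phiD t = phiD (-t); unfold phiD; rw [neg_pow]; ring_nf)
  have h2 := Phi_add_compl 0
  rw [Phi_eq] at h2 ⊢
  linarith [h1, h2]

lemma Phi_tendsto_one : Tendsto Phi atTop (𝓝 1) := by
  have h := (MeasureTheory.aecover_Iic (tendsto_id : Tendsto (id : ℝ → ℝ) atTop atTop)
    (μ := volume)).integral_tendsto_of_countably_generated phiD_int
  rw [phiD_total] at h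
  exact h

lemma PhiInv_spec {q : ℝ} (hq : q ∈ Ioo (1/2 : ℝ) 1) : Phi (PhiInv q) = q ∧ 0 < PhiInv q := by
  obtain ⟨M, hM⟩ : ∃ M, q < Phi M := by
    have := Phi_tendsto_one.eventually (eventually_gt_nhds hq.2)
    exact this.exists
  set M' := max M 0 with hM'
  have hM'q : q ≤ Phi M' := le_trans hM.le (Phi_strictMono.monotone (le_max_left _ _))
  have h0M : (0:ℝ) ≤ M' := le_max_right _ _
  have hsub := intermediate_value_Icc h0M Phi_cont.continuousOn
  have hqmem : q ∈ Icc (Phi 0) (Phi M') := ⟨by rw [Phi_zero]; exact hq.1.le, hM'q⟩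
  obtain ⟨z, _, hz⟩ := hsub hqmem
  have hset : {x : ℝ | q ≤ Phi x} = Ici z := by
    ext u
    simp only [mem_setOf_eq, mem_Ici, ← hz]
    exact ⟨fun h => (Phi_strictMono.le_iff_le).1 h, fun h => Phi_strictMono.monotone h⟩
  have hPI : PhiInv q = z := by rw [PhiInv, hset, csInf_Ici]
  refine ⟨by rw [hPI, hz], ?_⟩
  rw [hPI]
  have : Phi 0 < Phi z := by rw [Phi_zero, hz]; exact hq.1
  exact Phi_strictMono.lt_iff_lt.1 this

lemma h_strictMonoOn (x : ℝ) :
    StrictMonoOn (fun z => (Phi (x + z) - Phi (x - z)) / (1 - Phi z)) (Ioi (0:ℝ)) := by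
  have hDne : ∀ z : ℝ, 1 - Phi z ≠ 0 := fun z => ne_of_gt (sub_pos.2 (Phi_lt_one z))
  have hderiv : ∀ z : ℝ, HasDerivAt (fun z => (Phi (x + z) - Phi (x - z)) / (1 - Phi z))
      (((phiD (x + z) + phiD (x - z)) * (1 - Phi z) -
        (Phi (x + z) - Phi (x - z)) * (-phiD z)) / (1 - Phi z) ^ 2) z := by
    intro z
    have h1 : HasDerivAt (fun z => Phi (x + z)) (phiD (x + z)) z := by
      simpa [Function.comp_def] using (Phi_hasDeriv (x + z)).comp z ((hasDerivAt_id z).const_add x)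
    have h2 : HasDerivAt (fun z => Phi (x - z)) (-phiD (x - z)) z := by
      simpa [Function.comp_def] using (Phi_hasDeriv (x - z)).comp z ((hasDerivAt_id z).neg.const_add x)
    have hN : HasDerivAt (fun z => Phi (x + z) - Phi (x - z))
        (phiD (x + z) + phiD (x - z)) z := by
      simpa [sub_neg_eq_add, Pi.sub_def] using h1.sub h2
    have hD : HasDerivAt (fun z => 1 - Phi z) (-phiD z) z := (Phi_hasDeriv z).const_sub 1
    exact hN.div hD (hDne z)
  apply strictMonoOn_of_deriv_pos (convex_Ioi 0)
  · exact fun z _ => ((hderiv z).differentiableAt.continuousAt).continuousWithinAt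
  · intro z hz
    rw [interior_Ioi] at hz
    rw [(hderiv z).deriv]
    have hDpos : 0 < 1 - Phi z := sub_pos.2 (Phi_lt_one z)
    have hNpos : 0 < Phi (x + z) - Phi (x - z) :=
      sub_pos.2 (Phi_strictMono (by linarith [mem_Ioi.1 hz]))
    have : 0 < (phiD (x + z) + phiD (x - z)) * (1 - Phi z) -
        (Phi (x + z) - Phi (x - z)) * (-phiD z) := by
      have := phiD_pos (x + z); have := phiD_pos (x - z); have := phiD_pos z
      nlinarith
    positivity

/-- Strict monotonicity of `F` in the last argument: for fixed `α ∈ (0,1)` and `x ∈ ℝ`,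
`y ↦ F(α,x,y)` is strictly decreasing on `(α,∞)`; in particular, for integers
`1 ≤ k₁ < k₂`, `F(α,x,k₂) < F(α,x,k₁)`. -/
theorem F_strict_decreasing_in_k (α x : ℝ) (hα : α ∈ Set.Ioo (0 : ℝ) 1) :
    (∀ y₁ y₂ : ℝ, α < y₁ → y₁ < y₂ → Fpow α x y₂ < Fpow α x y₁) ∧
      ∀ k₁ k₂ : ℕ, 1 ≤ k₁ → k₁ < k₂ → Fpow α x k₂ < Fpow α x k₁ := by
  obtain ⟨hα0, hα1⟩ := hα
  have main : ∀ y₁ y₂ : ℝ, α < y₁ → y₁ < y₂ → Fpow α x y₂ < Fpow α x y₁ := by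
    intro y₁ y₂ hy₁ h12
    have hy₁0 : 0 < y₁ := hα0.trans hy₁
    have hy₂0 : 0 < y₂ := hy₁0.trans h12
    have hy₂ : α < y₂ := hy₁.trans h12
    have key : ∀ y : ℝ, α < y →
        (1 - α / (2 * y)) ∈ Ioo (1/2 : ℝ) 1 := by
      intro y hy
      have hy0 : 0 < y := hα0.trans hy
      constructor
      · have : α / (2 * y) < 1 / 2 := by
          rw [div_lt_div_iff₀ (by linarith) (by norm_num)]
          linarith
        linarith
      · have : 0 < α / (2 * y) := div_pos hα0 (by linarith)
        linarith
    set q₁ := 1 - α / (2 * y₁) with hq₁def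
    set q₂ := 1 - α / (2 * y₂) with hq₂def
    obtain ⟨hz₁eq, hz₁pos⟩ := PhiInv_spec (key y₁ hy₁)
    obtain ⟨hz₂eq, hz₂pos⟩ := PhiInv_spec (key y₂ hy₂)
    set z₁ := PhiInv q₁
    set z₂ := PhiInv q₂
    have hqlt : q₁ < q₂ := by
      have : α / (2 * y₂) < α / (2 * y₁) :=
        div_lt_div_of_pos_left hα0 (by linarith) (by linarith)
      simp only [hq₁def, hq₂def]; linarith
    have hzlt : z₁ < z₂ := Phi_strictMono.lt_iff_lt.1 (by rw [hz₁eq, hz₂eq]; exact hqlt)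
    have hform : ∀ (y : ℝ) (z : ℝ), 0 < y → Phi z = 1 - α / (2 * y) →
        y * (Phi (x + z) - Phi (x - z)) =
          (α / 2) * ((Phi (x + z) - Phi (x - z)) / (1 - Phi z)) := by
      intro y z hy0 hz
      have hD : 1 - Phi z = α / (2 * y) := by rw [hz]; ring
      rw [hD]
      field_simp
    have hmono := h_strictMonoOn x hz₁pos hz₂pos hzlt
    have h1 : Fpow α x y₁ = 1 - (α / 2) * ((Phi (x + z₁) - Phi (x - z₁)) / (1 - Phi z₁)) := by
      rw [Fpow, hform y₁ z₁ hy₁0 hz₁eq]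
    have h2 : Fpow α x y₂ = 1 - (α / 2) * ((Phi (x + z₂) - Phi (x - z₂)) / (1 - Phi z₂)) := by
      rw [Fpow, hform y₂ z₂ hy₂0 hz₂eq]
    rw [h1, h2]
    have := mul_lt_mul_of_pos_left hmono (by linarith : (0:ℝ) < α / 2)
    linarith
  refine ⟨main, fun k₁ k₂ h1 h2 => ?_⟩
  apply main
  · calc α < 1 := hα1
      _ ≤ (k₁ : ℝ) := by exact_mod_cast h1
  · exact_mod_cast h2


end
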